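/- Let t > 0 and let g = a_t, the automorphism of B^m given by a_t(z) = (cosh(t)z₁ + sinh(t), z₂, …, z_m)/(sinh(t)z₁ + cosh(t)). If z = c·e₁ with c ∈ ℂ, |c| ≤ 1, c ≠ ±1, then lim_{n→∞} (1/n) log ‖gⁿ(z) − e₁‖ = −2t. -/

import Mathlib

open Metric Filter

noncomputable section

/-- The one-parameter family of automorphisms `a_t` of the unit ball in `ℂ^m`:
`a_t(z) = (cosh(t) z₁ + sinh(t), z₂, …, z_m) / (sinh(t) z₁ + cosh(t))`. -/
def aT {m : ℕ} [NeZero m] (t : ℝ) (z : EuclideanSpace ℂ (Fin m)) : EuclideanSpace ℂ (Fin m) :=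
  WithLp.toLp 2 (fun i => (if i = 0 then (Real.cosh t : ℂ) * z 0 + Real.sinh t else z i) /
    ((Real.sinh t : ℂ) * z 0 + Real.cosh t))

lemma aT_smul {m : ℕ} [NeZero m] (t : ℝ) (d : ℂ) :
    aT (m := m) t (d • EuclideanSpace.single 0 (1 : ℂ)) =
      (((Real.cosh t : ℂ) * d + Real.sinh t) /
        ((Real.sinh t : ℂ) * d + Real.cosh t)) • EuclideanSpace.single 0 (1 : ℂ) := by
  ext i
  simp only [aT, PiLp.toLp_apply, PiLp.smul_apply, EuclideanSpace.single_apply, smul_eq_mul]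
  by_cases h : i = 0 <;> simp [h]

lemma den_ne (c : ℂ) (hc : ‖c‖ ≤ 1) {x : ℝ} (hx : 0 ≤ x) :
    c * (Real.sinh x : ℂ) + (Real.cosh x : ℂ) ≠ 0 := by
  intro h
  have h2 : c * (Real.sinh x : ℂ) = -(Real.cosh x : ℂ) := by linear_combination h
  have h3 := congrArg (‖·‖) h2
  rw [norm_mul, norm_neg, Complex.norm_real, Complex.norm_real, Real.norm_eq_abs, Real.norm_eq_abs,
    abs_of_nonneg (Real.sinh_nonneg_iff.2 hx), abs_of_nonneg (Real.cosh_pos x).le] at h3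
  have h4 : ‖c‖ * Real.sinh x ≤ Real.sinh x :=
    mul_le_of_le_one_left (Real.sinh_nonneg_iff.2 hx) hc
  have h5 : Real.sinh x < Real.cosh x := Real.sinh_lt_cosh x
  linarith

lemma aT_iter {m : ℕ} [NeZero m] (t : ℝ) (ht : 0 ≤ t) (c : ℂ)
    (hc : ‖c‖ ≤ 1) (n : ℕ) :
    (aT (m := m) t)^[n] (c • EuclideanSpace.single 0 (1 : ℂ)) =
      ((c * Real.cosh (n * t) + Real.sinh (n * t)) /
        (c * Real.sinh (n * t) + Real.cosh (n * t))) • EuclideanSpace.single 0 (1 : ℂ) := by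
  induction n with
  | zero => simp
  | succ n ih =>
    rw [Function.iterate_succ_apply', ih, aT_smul]
    congr 1
    have hx : (0:ℝ) ≤ (n : ℝ) * t := by positivity
    have hD : c * (Real.sinh ((n:ℝ)*t) : ℂ) + Real.cosh ((n:ℝ)*t) ≠ 0 := den_ne c hc hx
    have hexp : ((n:ℕ)+1 : ℝ) * t = (n:ℝ)*t + t := by ring
    have e1 : (Real.cosh t : ℂ) * ((c * Real.cosh ((n:ℝ)*t) + Real.sinh ((n:ℝ)*t)) /
          (c * Real.sinh ((n:ℝ)*t) + Real.cosh ((n:ℝ)*t))) + Real.sinh t =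
        ((Real.cosh t : ℂ) * (c * Real.cosh ((n:ℝ)*t) + Real.sinh ((n:ℝ)*t)) +
          (Real.sinh t : ℂ) * (c * Real.sinh ((n:ℝ)*t) + Real.cosh ((n:ℝ)*t))) /
          (c * Real.sinh ((n:ℝ)*t) + Real.cosh ((n:ℝ)*t)) := by
      rw [← mul_div_assoc, div_add' _ _ _ hD]
    have e2 : (Real.sinh t : ℂ) * ((c * Real.cosh ((n:ℝ)*t) + Real.sinh ((n:ℝ)*t)) /
          (c * Real.sinh ((n:ℝ)*t) + Real.cosh ((n:ℝ)*t))) + Real.cosh t =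
        ((Real.sinh t : ℂ) * (c * Real.cosh ((n:ℝ)*t) + Real.sinh ((n:ℝ)*t)) +
          (Real.cosh t : ℂ) * (c * Real.sinh ((n:ℝ)*t) + Real.cosh ((n:ℝ)*t))) /
          (c * Real.sinh ((n:ℝ)*t) + Real.cosh ((n:ℝ)*t)) := by
      rw [← mul_div_assoc, div_add' _ _ _ hD]
    rw [e1, e2, div_div_div_cancel_right₀ hD]
    have hcast : ((n+1 : ℕ) : ℝ) * t = (n:ℝ)*t + t := by push_cast; ring
    congr 1
    · rw [hcast, Real.cosh_add, Real.sinh_add]; push_cast; ring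
    · rw [hcast, Real.cosh_add, Real.sinh_add]; push_cast; ring

/-- Auxiliary: the error factor. -/
def Efun (c : ℂ) (t : ℝ) (n : ℕ) : ℂ := (c + 1) + (Real.exp (-(2 * ((n:ℝ) * t))) : ℂ) * (1 - c)

lemma norm_smul_sub {m : ℕ} [NeZero m] (d : ℂ) :
    ‖d • EuclideanSpace.single (0 : Fin m) (1:ℂ) - EuclideanSpace.single 0 (1:ℂ)‖
      = ‖d - 1‖ := by
  have h : d • EuclideanSpace.single (0 : Fin m) (1:ℂ) - EuclideanSpace.single 0 (1:ℂ)
      = (d - 1) • EuclideanSpace.single (0 : Fin m) (1:ℂ) := by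
    rw [sub_smul, one_smul]
  rw [h, norm_smul, EuclideanSpace.norm_single]
  simp

set_option maxHeartbeats 1000000 in
/-- For `t > 0`, `g = a_t`, and `z = c • e₁` with `|c| ≤ 1`, `c ≠ ±1`,
one has `lim_{n→∞} (1/n) log ‖gⁿ(z) − e₁‖ = −2t`. -/
theorem stmt6 {m : ℕ} [NeZero m] (t : ℝ) (ht : 0 < t) (c : ℂ)
    (hc : ‖c‖ ≤ 1) (hc1 : c ≠ 1) (hc2 : c ≠ -1) :
    Tendsto (fun n : ℕ => (1 / (n : ℝ)) *
        Real.log ‖(aT (m := m) t)^[n] (c • EuclideanSpace.single 0 (1 : ℂ))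
          - EuclideanSpace.single 0 (1 : ℂ)‖)
      atTop (nhds (-2 * t)) := by
  have hc1' : ‖c - 1‖ ≠ 0 := by
    simp only [ne_eq, norm_eq_zero, sub_eq_zero]; exact hc1
  have hc2' : ‖c + 1‖ ≠ 0 := by
    simp only [ne_eq, norm_eq_zero]
    intro h; apply hc2; linear_combination h
  -- factor the denominator
  have hfac : ∀ n : ℕ, c * (Real.sinh ((n:ℝ)*t) : ℂ) + (Real.cosh ((n:ℝ)*t) : ℂ)
      = (Real.exp ((n:ℝ)*t) / 2 : ℝ) * Efun c t n := by
    intro n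
    simp only [Efun]
    set x := (n:ℝ)*t with hx
    have hinv : (Real.exp x : ℂ) * (Real.exp (-x) : ℂ) = 1 := by
      rw [← Complex.ofReal_mul, ← Real.exp_add, add_neg_cancel, Real.exp_zero,
        Complex.ofReal_one]
    have h2 : ((Real.exp (-(2*x)) : ℝ) : ℂ) = ((Real.exp (-x) : ℝ) : ℂ)^2 := by
      have h3 : Real.exp (-(2*x)) = Real.exp (-x)^2 := by
        rw [sq, ← Real.exp_add]; congr 1; ring
      rw [h3, Complex.ofReal_pow]
    rw [Real.sinh_eq, Real.cosh_eq]
    simp only [Complex.ofReal_div, Complex.ofReal_sub, Complex.ofReal_add,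
      Complex.ofReal_ofNat]
    rw [h2]
    linear_combination (-(((Real.exp (-x) : ℂ)) * (1 - c) / 2)) * hinv
  have hEne : ∀ n : ℕ, Efun c t n ≠ 0 := by
    intro n h
    have hD : c * (Real.sinh ((n:ℝ)*t) : ℂ) + (Real.cosh ((n:ℝ)*t) : ℂ) ≠ 0 :=
      den_ne c hc (by positivity)
    apply hD
    rw [hfac n, h, mul_zero]
  -- the norm formula
  have hnorm : ∀ n : ℕ,
      ‖(aT (m := m) t)^[n] (c • EuclideanSpace.single 0 (1 : ℂ))
          - EuclideanSpace.single 0 (1 : ℂ)‖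
        = ‖c - 1‖ * Real.exp (-((n:ℝ)*t)) /
            (Real.exp ((n:ℝ)*t) / 2 * ‖Efun c t n‖) := by
    intro n
    rw [aT_iter t ht.le c hc, norm_smul_sub]
    have hD : c * (Real.sinh ((n:ℝ)*t) : ℂ) + (Real.cosh ((n:ℝ)*t) : ℂ) ≠ 0 :=
      den_ne c hc (by positivity)
    have hnum : (c * (Real.cosh ((n:ℝ)*t) : ℂ) + Real.sinh ((n:ℝ)*t))
        - (c * Real.sinh ((n:ℝ)*t) + Real.cosh ((n:ℝ)*t))
        = (c - 1) * (Real.exp (-((n:ℝ)*t)) : ℂ) := by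
      rw [← Real.cosh_sub_sinh]; push_cast; ring
    rw [div_sub_one hD, hnum, hfac n, norm_div, norm_mul, norm_mul,
      Complex.norm_real, Complex.norm_real, Real.norm_eq_abs, Real.norm_eq_abs,
      abs_of_pos (Real.exp_pos _), abs_of_pos (by positivity : (0:ℝ) < Real.exp ((n:ℝ)*t)/2)]
  -- logarithm formula, for n ≥ 1
  have hlog : ∀ n : ℕ, 1 ≤ n →
      (1 / (n : ℝ)) * Real.log ‖(aT (m := m) t)^[n] (c • EuclideanSpace.single 0 (1 : ℂ))
          - EuclideanSpace.single 0 (1 : ℂ)‖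
        = -2 * t + (Real.log (‖c - 1‖) + Real.log 2
            - Real.log (‖Efun c t n‖)) / n := by
    intro n hn
    have hn' : (0:ℝ) < n := by exact_mod_cast hn
    have hEabs : ‖Efun c t n‖ ≠ 0 := by simp [hEne n]
    rw [hnorm n, Real.log_div (by positivity) (by positivity),
      Real.log_mul hc1' (Real.exp_ne_zero _),
      Real.log_mul (by positivity) hEabs, Real.log_div (Real.exp_ne_zero _) (by norm_num),
      Real.log_exp, Real.log_exp]
    field_simp
    ring
  -- the error term tends to a constant
  have hEtends : Tendsto (fun n : ℕ => Efun c t n) atTop (nhds (c + 1)) := by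
    have h0 : Tendsto (fun n : ℕ => (Real.exp (-(2*t)))^n) atTop (nhds 0) := by
      apply tendsto_pow_atTop_nhds_zero_of_lt_one (Real.exp_nonneg _)
      rw [Real.exp_lt_one_iff]; linarith
    have h1 : Tendsto (fun n : ℕ => Real.exp (-(2 * ((n:ℝ) * t)))) atTop (nhds 0) := by
      refine h0.congr (fun n => ?_)
      rw [← Real.exp_nat_mul]; ring_nf
    have h2 : Tendsto (fun n : ℕ => ((Real.exp (-(2 * ((n:ℝ) * t))) : ℝ) : ℂ) * (1 - c))
        atTop (nhds 0) := by
      have := ((Complex.continuous_ofReal.tendsto 0).comp h1).mul_const (1 - c)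
      simpa using this
    simp only [Efun]
    simpa using tendsto_const_nhds.add h2
  have hlogE : Tendsto (fun n : ℕ => Real.log (‖Efun c t n‖)) atTop
      (nhds (Real.log (‖c + 1‖))) := by
    have habs : Tendsto (fun n : ℕ => ‖Efun c t n‖) atTop
        (nhds (‖c + 1‖)) := (continuous_norm.tendsto _).comp hEtends
    exact ((Real.continuousAt_log hc2').tendsto).comp habs
  -- conclusion
  have hF : Tendsto (fun n : ℕ => (Real.log (‖c - 1‖) + Real.log 2
      - Real.log (‖Efun c t n‖)) / (n:ℝ)) atTop (nhds 0) :=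
    (tendsto_const_nhds.sub hlogE).div_atTop tendsto_natCast_atTop_atTop
  have main : Tendsto (fun n : ℕ => -2 * t + (Real.log (‖c - 1‖) + Real.log 2
      - Real.log (‖Efun c t n‖)) / (n:ℝ)) atTop (nhds (-2 * t)) := by
    simpa using tendsto_const_nhds.add hF
  apply main.congr'
  filter_upwards [eventually_ge_atTop 1] with n hn
  exact (hlog n hn).symm
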